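/- The reduced potential Ũ is strictly positive and strictly convex on (−1,1) and blows up at the endpoints: Ũ(s) > 0 for all s ∈ (−1,1), Ũ''(s) > 0 for all s ∈ (−1,1), and Ũ(s) → +∞ as s → −1⁺ and as s → 1⁻. Consequently Ũ has a unique critical point s_e ∈ (−1,1), and s_e is its strict global minimum. -/

import Mathlib

open Real Matrix

section Aux

private noncomputable def gf (A lam e t : ℝ) : ℝ := A * Real.sin (lam * (1 + e * t))
private noncomputable def gf' (A lam e t : ℝ) : ℝ := A * lam * e * Real.cos (lam * (1 + e * t))

private lemma gf_deriv (A lam e s : ℝ) : HasDerivAt (gf A lam e) (gf' A lam e s) s := by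
  have hin : HasDerivAt (fun t : ℝ => lam * (1 + e * t)) (lam * e) s := by
    simpa using (((hasDerivAt_id s).const_mul e).const_add (1:ℝ)).const_mul lam
  have h := ((Real.hasDerivAt_sin (lam * (1 + e * s))).comp s hin).const_mul A
  refine h.congr_deriv (Eq.symm ?_)
  simp [gf']; ring

private lemma gf_deriv' (A lam e s : ℝ) (he : e ^ 2 = 1) :
    HasDerivAt (gf' A lam e) (-(lam ^ 2) * gf A lam e s) s := by
  have hin : HasDerivAt (fun t : ℝ => lam * (1 + e * t)) (lam * e) s := by
    simpa using (((hasDerivAt_id s).const_mul e).const_add (1:ℝ)).const_mul lam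
  have h := ((Real.hasDerivAt_cos (lam * (1 + e * s))).comp s hin).const_mul (A * lam * e)
  refine h.congr_deriv (Eq.symm ?_)
  simp only [gf]
  linear_combination (A * lam ^ 2 * Real.sin (lam * (1 + e * s))) * he

private lemma gf_cont (A lam e : ℝ) : Continuous (gf A lam e) := by
  unfold gf; fun_prop

private lemma term_bundle (a lam α : ℝ) (ha : 0 < a) (hlam : 0 < lam) (hα : 0 < α)
    (g g' : ℝ → ℝ) (s : ℝ)
    (hgd : HasDerivAt g (g' s) s) (hgd' : HasDerivAt g' (-(lam ^ 2) * g s) s)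
    (h : 0 < g s) :
    HasDerivAt (fun t => α * g t ^ (-a)) (α * (-a * g s ^ (-a - 1) * g' s)) s ∧
    ∃ w, 0 < w ∧ HasDerivAt (fun t => α * (-a * g t ^ (-a - 1) * g' t)) w s := by
  constructor
  · have h1 := (hgd.rpow_const (p := -a) (Or.inl h.ne')).const_mul α
    refine h1.congr_deriv (Eq.symm ?_)
    ring
  · have h1 : HasDerivAt (fun t => α * (-a * g t ^ (-a - 1)))
        (α * (-a * ((-a - 1) * g s ^ (-a - 1 - 1) * g' s))) s := by
      have := ((hgd.rpow_const (p := -a - 1) (Or.inl h.ne')).const_mul (-a)).const_mul α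
      refine this.congr_deriv (Eq.symm ?_)
      ring
    have h2 := h1.mul hgd'
    refine ⟨_, ?_, by simpa [mul_assoc, Pi.mul_def] using h2⟩
    have hx : 0 < g s ^ (-a - 1 - 1) := Real.rpow_pos_of_pos h _
    have hy : 0 < g s ^ (-a - 1) := Real.rpow_pos_of_pos h _
    have h3 : 0 < α * (a * (lam ^ 2 * (g s ^ (-a - 1) * g s))) := by positivity
    nlinarith [mul_nonneg (mul_nonneg (mul_nonneg hα.le ha.le) (by linarith : (0:ℝ) ≤ a + 1))
      (mul_nonneg hx.le (sq_nonneg (g' s)))]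

-- tendsto x^(-a) → ∞ as x → 0+
private lemma rpow_neg_blowup {a : ℝ} (ha : 0 < a) :
    Filter.Tendsto (fun x : ℝ => x ^ (-a)) (nhdsWithin 0 (Set.Ioi 0)) Filter.atTop := by
  have h2 : Filter.Tendsto (fun x : ℝ => x ^ a) (nhdsWithin 0 (Set.Ioi 0))
      (nhdsWithin 0 (Set.Ioi 0)) := by
    rw [tendsto_nhdsWithin_iff]
    constructor
    · have hc : ContinuousAt (fun x : ℝ => x ^ a) 0 :=
        Real.continuousAt_rpow_const 0 a (Or.inr ha.le)
      have := hc.tendsto.mono_left (nhdsWithin_le_nhds (s := Set.Ioi (0:ℝ)))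
      simpa [Real.zero_rpow ha.ne'] using this
    · filter_upwards [eventually_mem_nhdsWithin] with x hx
      exact Real.rpow_pos_of_pos hx a
  have := tendsto_inv_nhdsGT_zero.comp h2
  refine this.congr' ?_
  filter_upwards [eventually_mem_nhdsWithin] with x hx
  simp [Function.comp, Real.rpow_neg (le_of_lt hx)]

end Aux

/-- The reduced potential `Ũ` is strictly positive and strictly convex
on `(−1,1)`, blows up at both endpoints, and hence has a unique critical point
`s_e ∈ (−1,1)`, which is its strict global minimum. -/
theorem reduced_potential_convexity
    (a b : ℝ) (ha : 4 < a) (hab : a < b - 1)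
    (m1 m2 m3 : ℝ) (hm1 : 0 < m1) (hm2 : 0 < m2) (hm3 : 0 < m3)
    (α12 α13 α23 : ℝ) (hα12 : 0 < α12) (hα13 : 0 < α13) (hα23 : 0 < α23)
    (M : Matrix (Fin 3) (Fin 3) ℝ) (hM : M = Matrix.diagonal ![m1, m2, m3])
    (c d : Fin 3 → ℝ)
    (hc : c = ![-Real.sqrt (m3 / ((m1 + m2) * (m1 + m2 + m3))),
                -Real.sqrt (m3 / ((m1 + m2) * (m1 + m2 + m3))),
                Real.sqrt ((m1 + m2) / (m3 * (m1 + m2 + m3)))])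
    (hd : d = ![-Real.sqrt ((m2 + m3) / (m1 * (m1 + m2 + m3))),
                Real.sqrt (m1 / ((m2 + m3) * (m1 + m2 + m3))),
                Real.sqrt (m1 / ((m2 + m3) * (m1 + m2 + m3)))])
    (lam : ℝ) (hlam : lam ∈ Set.Ioo 0 (Real.pi / 4))
    (hlam2 : Real.cos (2 * lam) = c ⬝ᵥ M.mulVec d)
    (r12 r23 : ℝ → ℝ)
    (hr12 : ∀ s : ℝ, r12 s = (d 1 - d 0) * Real.sin (lam * (1 + s)) / Real.sin (2 * lam))
    (hr23 : ∀ s : ℝ, r23 s = (c 2 - c 1) * Real.sin (lam * (1 - s)) / Real.sin (2 * lam))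
    (U : ℝ → ℝ)
    (hU : ∀ s : ℝ, U s = α12 * r12 s ^ (-a) + α23 * r23 s ^ (-a)
          + α13 * (r12 s + r23 s) ^ (-a)) :
    (∀ s ∈ Set.Ioo (-1 : ℝ) 1, 0 < U s) ∧
    (∀ s ∈ Set.Ioo (-1 : ℝ) 1, 0 < deriv (deriv U) s) ∧
    Filter.Tendsto U (nhdsWithin (-1) (Set.Ioo (-1 : ℝ) 1)) Filter.atTop ∧
    Filter.Tendsto U (nhdsWithin 1 (Set.Ioo (-1 : ℝ) 1)) Filter.atTop ∧
    (∃! se : ℝ, se ∈ Set.Ioo (-1 : ℝ) 1 ∧ deriv U se = 0) ∧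
    (∀ se : ℝ, se ∈ Set.Ioo (-1 : ℝ) 1 → deriv U se = 0 →
      ∀ s ∈ Set.Ioo (-1 : ℝ) 1, s ≠ se → U se < U s) := by
  have hpi := Real.pi_pos
  obtain ⟨hlam0, hlam4⟩ := hlam
  have ha0 : (0:ℝ) < a := by linarith
  have hsin2 : 0 < Real.sin (2 * lam) :=
    Real.sin_pos_of_pos_of_lt_pi (by linarith) (by linarith)
  have hd10 : 0 < d 1 - d 0 := by
    have e1 : d 1 = Real.sqrt (m1 / ((m2 + m3) * (m1 + m2 + m3))) := by rw [hd]; rfl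
    have e0 : d 0 = -Real.sqrt ((m2 + m3) / (m1 * (m1 + m2 + m3))) := by rw [hd]; rfl
    have h1 : 0 < Real.sqrt (m1 / ((m2 + m3) * (m1 + m2 + m3))) :=
      Real.sqrt_pos.mpr (by positivity)
    have h2 : 0 < Real.sqrt ((m2 + m3) / (m1 * (m1 + m2 + m3))) :=
      Real.sqrt_pos.mpr (by positivity)
    rw [e1, e0]; linarith
  have hc21 : 0 < c 2 - c 1 := by
    have e2 : c 2 = Real.sqrt ((m1 + m2) / (m3 * (m1 + m2 + m3))) := by rw [hc]; rfl
    have e1 : c 1 = -Real.sqrt (m3 / ((m1 + m2) * (m1 + m2 + m3))) := by rw [hc]; rfl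
    have h1 : 0 < Real.sqrt ((m1 + m2) / (m3 * (m1 + m2 + m3))) :=
      Real.sqrt_pos.mpr (by positivity)
    have h2 : 0 < Real.sqrt (m3 / ((m1 + m2) * (m1 + m2 + m3))) :=
      Real.sqrt_pos.mpr (by positivity)
    rw [e2, e1]; linarith
  obtain ⟨A, hAdef⟩ : ∃ A : ℝ, A = (d 1 - d 0) / Real.sin (2 * lam) := ⟨_, rfl⟩
  obtain ⟨B, hBdef⟩ : ∃ B : ℝ, B = (c 2 - c 1) / Real.sin (2 * lam) := ⟨_, rfl⟩
  have hA : 0 < A := hAdef ▸ div_pos hd10 hsin2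
  have hB : 0 < B := hBdef ▸ div_pos hc21 hsin2
  have hr12g : ∀ s, r12 s = gf A lam 1 s := by
    intro s
    rw [hr12, hAdef]
    show _ = (d 1 - d 0) / Real.sin (2 * lam) * Real.sin (lam * (1 + 1 * s))
    rw [show lam * (1 + 1 * s) = lam * (1 + s) by ring]
    ring
  have hr23g : ∀ s, r23 s = gf B lam (-1) s := by
    intro s
    rw [hr23, hBdef]
    show _ = (c 2 - c 1) / Real.sin (2 * lam) * Real.sin (lam * (1 + (-1) * s))
    rw [show lam * (1 + (-1) * s) = lam * (1 - s) by ring]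
    ring
  have hg1pos : ∀ s ∈ Set.Ioo (-1:ℝ) 1, 0 < gf A lam 1 s := by
    intro s hs
    show 0 < A * Real.sin (lam * (1 + 1 * s))
    have h1 : 0 < lam * (1 + 1 * s) := by nlinarith [hs.1]
    have h2 : lam * (1 + 1 * s) < Real.pi := by nlinarith [hs.2]
    exact mul_pos hA (Real.sin_pos_of_pos_of_lt_pi h1 h2)
  have hg2pos : ∀ s ∈ Set.Ioo (-1:ℝ) 1, 0 < gf B lam (-1) s := by
    intro s hs
    show 0 < B * Real.sin (lam * (1 + (-1) * s))
    have h1 : 0 < lam * (1 + (-1) * s) := by nlinarith [hs.2]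
    have h2 : lam * (1 + (-1) * s) < Real.pi := by nlinarith [hs.1]
    exact mul_pos hB (Real.sin_pos_of_pos_of_lt_pi h1 h2)
  have hUeq : U = fun s => α12 * gf A lam 1 s ^ (-a) + α23 * gf B lam (-1) s ^ (-a)
      + α13 * (gf A lam 1 s + gf B lam (-1) s) ^ (-a) := by
    funext s; rw [hU, hr12g, hr23g]
  obtain ⟨V, hVdef⟩ : ∃ V : ℝ → ℝ, V = fun s =>
      α12 * (-a * gf A lam 1 s ^ (-a - 1) * gf' A lam 1 s)
      + α23 * (-a * gf B lam (-1) s ^ (-a - 1) * gf' B lam (-1) s)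
      + α13 * (-a * (gf A lam 1 s + gf B lam (-1) s) ^ (-a - 1)
          * (gf' A lam 1 s + gf' B lam (-1) s)) := ⟨_, rfl⟩
  have hbundle : ∀ s ∈ Set.Ioo (-1:ℝ) 1,
      HasDerivAt U (V s) s ∧ ∃ w, 0 < w ∧ HasDerivAt V w s := by
    intro s hs
    have h3d : HasDerivAt (fun t => gf A lam 1 t + gf B lam (-1) t)
        ((fun t => gf' A lam 1 t + gf' B lam (-1) t) s) s :=
      (gf_deriv A lam 1 s).add (gf_deriv B lam (-1) s)
    have h3d' : HasDerivAt (fun t => gf' A lam 1 t + gf' B lam (-1) t)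
        (-(lam ^ 2) * ((fun t => gf A lam 1 t + gf B lam (-1) t) s)) s := by
      have := (gf_deriv' A lam 1 s (by norm_num)).add (gf_deriv' B lam (-1) s (by norm_num))
      refine this.congr_deriv (Eq.symm ?_)
      simp; ring
    have h1 := term_bundle a lam α12 ha0 hlam0 hα12 (gf A lam 1) (gf' A lam 1) s
      (gf_deriv A lam 1 s) (gf_deriv' A lam 1 s (by norm_num)) (hg1pos s hs)
    have h2 := term_bundle a lam α23 ha0 hlam0 hα23 (gf B lam (-1)) (gf' B lam (-1)) s
      (gf_deriv B lam (-1) s) (gf_deriv' B lam (-1) s (by norm_num)) (hg2pos s hs)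
    have h3 := term_bundle a lam α13 ha0 hlam0 hα13
      (fun t => gf A lam 1 t + gf B lam (-1) t)
      (fun t => gf' A lam 1 t + gf' B lam (-1) t) s h3d h3d'
      (add_pos (hg1pos s hs) (hg2pos s hs))
    constructor
    · have := (h1.1.add h2.1).add h3.1
      rw [hUeq, hVdef]
      exact this
    · obtain ⟨w1, hw1, hdw1⟩ := h1.2
      obtain ⟨w2, hw2, hdw2⟩ := h2.2
      obtain ⟨w3, hw3, hdw3⟩ := h3.2
      refine ⟨w1 + w2 + w3, by positivity, ?_⟩
      rw [hVdef]
      exact (hdw1.add hdw2).add hdw3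
  have hderU : ∀ s ∈ Set.Ioo (-1:ℝ) 1, HasDerivAt U (V s) s := fun s hs => (hbundle s hs).1
  have hEq : Set.EqOn (deriv U) V (Set.Ioo (-1:ℝ) 1) := fun t ht => (hderU t ht).deriv
  have hcontU : ContinuousOn U (Set.Ioo (-1:ℝ) 1) :=
    fun t ht => ((hderU t ht).continuousAt).continuousWithinAt
  have hcontV : ContinuousOn V (Set.Ioo (-1:ℝ) 1) := by
    intro t ht
    obtain ⟨w, _, hw⟩ := (hbundle t ht).2
    exact hw.continuousAt.continuousWithinAt
  have hderivVpos : ∀ s ∈ Set.Ioo (-1:ℝ) 1, 0 < deriv V s := by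
    intro s hs
    obtain ⟨w, hw, hdw⟩ := (hbundle s hs).2
    rw [hdw.deriv]; exact hw
  have hpos : ∀ s ∈ Set.Ioo (-1:ℝ) 1, 0 < U s := by
    intro s hs
    have h1 := hg1pos s hs
    have h2 := hg2pos s hs
    simp only [hUeq]
    have t1 : 0 < α12 * gf A lam 1 s ^ (-a) := mul_pos hα12 (Real.rpow_pos_of_pos h1 _)
    have t2 : 0 < α23 * gf B lam (-1) s ^ (-a) := mul_pos hα23 (Real.rpow_pos_of_pos h2 _)
    have t3 : 0 < α13 * (gf A lam 1 s + gf B lam (-1) s) ^ (-a) :=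
      mul_pos hα13 (Real.rpow_pos_of_pos (add_pos h1 h2) _)
    linarith
  have hsecond : ∀ s ∈ Set.Ioo (-1:ℝ) 1, 0 < deriv (deriv U) s := by
    intro s hs
    have hev : deriv U =ᶠ[nhds s] V := hEq.eventuallyEq_of_mem (isOpen_Ioo.mem_nhds hs)
    rw [hev.deriv_eq]
    exact hderivVpos s hs
  -- blow-up lemmas
  have hblow : ∀ (p : ℝ) (g : ℝ → ℝ) (α' : ℝ), 0 < α' → Continuous g → g p = 0 →
      (∀ s ∈ Set.Ioo (-1:ℝ) 1, 0 < g s) →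
      (∀ᶠ s in nhdsWithin p (Set.Ioo (-1:ℝ) 1), α' * g s ^ (-a) ≤ U s) →
      Filter.Tendsto U (nhdsWithin p (Set.Ioo (-1:ℝ) 1)) Filter.atTop := by
    intro p g α' hα' hgc hgp hgpos hle
    have h0 : Filter.Tendsto g (nhdsWithin p (Set.Ioo (-1:ℝ) 1)) (nhdsWithin 0 (Set.Ioi 0)) := by
      rw [tendsto_nhdsWithin_iff]
      constructor
      · have := (hgc.tendsto p).mono_left
          (nhdsWithin_le_nhds (s := Set.Ioo (-1:ℝ) 1))
        rwa [hgp] at this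
      · filter_upwards [eventually_mem_nhdsWithin] with x hx
        exact hgpos x hx
    have h1 : Filter.Tendsto (fun s => α' * g s ^ (-a))
        (nhdsWithin p (Set.Ioo (-1:ℝ) 1)) Filter.atTop :=
      Filter.Tendsto.const_mul_atTop hα' ((rpow_neg_blowup ha0).comp h0)
    exact Filter.tendsto_atTop_mono' _ hle h1
  have hblow1 : Filter.Tendsto U (nhdsWithin (-1) (Set.Ioo (-1:ℝ) 1)) Filter.atTop := by
    refine hblow (-1) (gf A lam 1) α12 hα12 (gf_cont A lam 1) ?_ hg1pos ?_
    · show A * Real.sin (lam * (1 + 1 * (-1))) = 0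
      norm_num
    · filter_upwards [eventually_mem_nhdsWithin] with s hs
      have h2 := hg2pos s hs
      have h1 := hg1pos s hs
      have t2 : 0 < α23 * gf B lam (-1) s ^ (-a) := mul_pos hα23 (Real.rpow_pos_of_pos h2 _)
      have t3 : 0 < α13 * (gf A lam 1 s + gf B lam (-1) s) ^ (-a) :=
        mul_pos hα13 (Real.rpow_pos_of_pos (add_pos h1 h2) _)
      simp only [hUeq]
      linarith
  have hblow2 : Filter.Tendsto U (nhdsWithin 1 (Set.Ioo (-1:ℝ) 1)) Filter.atTop := by
    refine hblow 1 (gf B lam (-1)) α23 hα23 (gf_cont B lam (-1)) ?_ hg2pos ?_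
    · show B * Real.sin (lam * (1 + (-1) * 1)) = 0
      norm_num
    · filter_upwards [eventually_mem_nhdsWithin] with s hs
      have h2 := hg2pos s hs
      have h1 := hg1pos s hs
      have t1 : 0 < α12 * gf A lam 1 s ^ (-a) := mul_pos hα12 (Real.rpow_pos_of_pos h1 _)
      have t3 : 0 < α13 * (gf A lam 1 s + gf B lam (-1) s) ^ (-a) :=
        mul_pos hα13 (Real.rpow_pos_of_pos (add_pos h1 h2) _)
      simp only [hUeq]
      linarith
  -- strict monotonicity of V
  have hmono : StrictMonoOn V (Set.Ioo (-1:ℝ) 1) := by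
    refine strictMonoOn_of_deriv_pos (convex_Ioo _ _) hcontV ?_
    intro s hs
    rw [interior_Ioo] at hs
    exact hderivVpos s hs
  -- find a point where V < 0
  have hNB1 : (nhdsWithin (-1:ℝ) (Set.Ioo (-1:ℝ) 1)).NeBot := by
    rw [nhdsWithin_Ioo_eq_nhdsGT (by norm_num : (-1:ℝ) < 1)]
    infer_instance
  have hNB2 : (nhdsWithin (1:ℝ) (Set.Ioo (-1:ℝ) 1)).NeBot := by
    rw [nhdsWithin_Ioo_eq_nhdsLT (by norm_num : (-1:ℝ) < 1)]
    infer_instance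
  have hmemL : (-(1:ℝ)/2) ∈ Set.Ioo (-1:ℝ) 1 := by norm_num
  have hmemR : ((1:ℝ)/2) ∈ Set.Ioo (-1:ℝ) 1 := by norm_num
  obtain ⟨x, hx1, hx2, hx3⟩ :=
    ((hblow1.eventually_gt_atTop (U (-(1:ℝ)/2))).and
      (((gt_mem_nhds (show (-1:ℝ) < -(1:ℝ)/2 by norm_num)).filter_mono nhdsWithin_le_nhds).and
        eventually_mem_nhdsWithin)).exists
  obtain ⟨y, hy1, hy2, hy3⟩ :=
    ((hblow2.eventually_gt_atTop (U ((1:ℝ)/2))).and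
      (((lt_mem_nhds (show (1:ℝ)/2 < 1 by norm_num)).filter_mono nhdsWithin_le_nhds).and
        eventually_mem_nhdsWithin)).exists
  -- MVT on [x, -1/2]
  have hsubL : Set.Icc x (-(1:ℝ)/2) ⊆ Set.Ioo (-1:ℝ) 1 := fun t ht =>
    ⟨lt_of_lt_of_le hx3.1 ht.1, lt_of_le_of_lt ht.2 (by norm_num)⟩
  obtain ⟨cL, hcLmem, hcLval⟩ := exists_hasDerivAt_eq_slope U V hx2 (hcontU.mono hsubL)
    (fun t ht => hderU t (hsubL (Set.Ioo_subset_Icc_self ht)))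
  have hcLIoo : cL ∈ Set.Ioo (-1:ℝ) 1 := hsubL (Set.Ioo_subset_Icc_self hcLmem)
  have hVcL : V cL < 0 := by
    rw [hcLval]
    apply div_neg_of_neg_of_pos
    · linarith
    · linarith [hcLmem.1, hcLmem.2, hx2]
  -- MVT on [1/2, y]
  have hsubR : Set.Icc ((1:ℝ)/2) y ⊆ Set.Ioo (-1:ℝ) 1 := fun t ht =>
    ⟨lt_of_lt_of_le (by norm_num) ht.1, lt_of_le_of_lt ht.2 hy3.2⟩
  obtain ⟨cR, hcRmem, hcRval⟩ := exists_hasDerivAt_eq_slope U V hy2 (hcontU.mono hsubR)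
    (fun t ht => hderU t (hsubR (Set.Ioo_subset_Icc_self ht)))
  have hcRIoo : cR ∈ Set.Ioo (-1:ℝ) 1 := hsubR (Set.Ioo_subset_Icc_self hcRmem)
  have hVcR : 0 < V cR := by
    rw [hcRval]
    apply div_pos
    · linarith
    · linarith [hcRmem.1, hcRmem.2, hy2]
  have hcLcR : cL < cR := by
    have := hcLmem.2
    have := hcRmem.1
    linarith
  -- IVT for V on [cL, cR]
  have hsubM : Set.Icc cL cR ⊆ Set.Ioo (-1:ℝ) 1 := fun t ht =>
    ⟨lt_of_lt_of_le hcLIoo.1 ht.1, lt_of_le_of_lt ht.2 hcRIoo.2⟩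
  obtain ⟨se, hseK, hVse⟩ := intermediate_value_Icc hcLcR.le (hcontV.mono hsubM)
    ⟨hVcL.le, hVcR.le⟩
  have hseIoo : se ∈ Set.Ioo (-1:ℝ) 1 := hsubM hseK
  have hseCrit : deriv U se = 0 := by rw [hEq hseIoo]; exact hVse
  -- strict global min statement
  have hmin : ∀ se0 ∈ Set.Ioo (-1:ℝ) 1, deriv U se0 = 0 →
      ∀ s ∈ Set.Ioo (-1:ℝ) 1, s ≠ se0 → U se0 < U s := by
    intro se0 hse0mem hse0crit s hs hne
    have hVse0 : V se0 = 0 := by rw [← hEq hse0mem]; exact hse0crit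
    rcases lt_or_gt_of_ne hne with h | h
    · have hsub : Set.Icc s se0 ⊆ Set.Ioo (-1:ℝ) 1 := fun t ht =>
        ⟨lt_of_lt_of_le hs.1 ht.1, lt_of_le_of_lt ht.2 hse0mem.2⟩
      have hanti : StrictAntiOn U (Set.Icc s se0) := by
        refine strictAntiOn_of_deriv_neg (convex_Icc _ _) (hcontU.mono hsub) ?_
        intro t ht
        rw [interior_Icc] at ht
        have htI : t ∈ Set.Ioo (-1:ℝ) 1 := hsub (Set.Ioo_subset_Icc_self ht)
        rw [hEq htI]
        have := hmono htI hse0mem ht.2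
        rw [hVse0] at this
        exact this
      exact hanti ⟨le_refl s, h.le⟩ ⟨h.le, le_refl se0⟩ h
    · have hsub : Set.Icc se0 s ⊆ Set.Ioo (-1:ℝ) 1 := fun t ht =>
        ⟨lt_of_lt_of_le hse0mem.1 ht.1, lt_of_le_of_lt ht.2 hs.2⟩
      have hmonoU : StrictMonoOn U (Set.Icc se0 s) := by
        refine strictMonoOn_of_deriv_pos (convex_Icc _ _) (hcontU.mono hsub) ?_
        intro t ht
        rw [interior_Icc] at ht
        have htI : t ∈ Set.Ioo (-1:ℝ) 1 := hsub (Set.Ioo_subset_Icc_self ht)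
        rw [hEq htI]
        have := hmono hse0mem htI ht.1
        rw [hVse0] at this
        exact this
      exact hmonoU ⟨le_refl se0, h.le⟩ ⟨h.le, le_refl s⟩ h
  refine ⟨hpos, hsecond, hblow1, hblow2, ⟨se, ⟨hseIoo, hseCrit⟩, ?_⟩, hmin⟩
  rintro y0 ⟨hy0mem, hy0crit⟩
  have hVy0 : V y0 = 0 := by rw [← hEq hy0mem]; exact hy0crit
  exact hmono.injOn hy0mem hseIoo (by rw [hVy0, hVse])
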